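/- Let P=(x₁,y₁) and Q=(x₂,y₂) be points on the twisted Edwards curve E with 1+d·x₁x₂y₁y₂ ≠ 0 and 1−d·x₁x₂y₁y₂ ≠ 0, and let (x₃,y₃)=P+Q and (x₄,y₄)=P−Q be given by the stated addition formulas. Set r_P = y₁² and r_Q = y₂², L = (d²r_P² − 2ad·r_P + a²)·r_Q² + (−2ad·r_P² + (2ad+2a²)·r_P − 2a²)·r_Q + a²·r_P² − 2a²·r_P + a², and M = (d²r_P² − 2d²r_P + d²)·r_Q² + (−2d²r_P² + (2d²+2ad)·r_P − 2ad)·r_Q + d²·r_P² − 2ad·r_P + a². If M ≠ 0, then y₃²·y₄² = L/M. -/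

import Mathlib

/-- Differential addition for the degree-4 compression `f₄(x,y) = y²` on the
twisted Edwards curve `a·x² + y² = 1 + d·x²·y²`. -/
theorem edwards_deg4_diff_add {K : Type*} [Field K] (a d : K)
    (hchar : (2 : K) ≠ 0) (ha : a ≠ 0) (hd : d ≠ 0) (had : a ≠ d)
    (x1 y1 x2 y2 x3 y3 x4 y4 : K)
    (hP : a * x1 ^ 2 + y1 ^ 2 = 1 + d * x1 ^ 2 * y1 ^ 2)
    (hQ : a * x2 ^ 2 + y2 ^ 2 = 1 + d * x2 ^ 2 * y2 ^ 2)
    (hden1 : 1 + d * x1 * x2 * y1 * y2 ≠ 0)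
    (hden2 : 1 - d * x1 * x2 * y1 * y2 ≠ 0)
    (hx3 : x3 = (x1 * y2 + y1 * x2) / (1 + d * x1 * x2 * y1 * y2))
    (hy3 : y3 = (y1 * y2 - a * x1 * x2) / (1 - d * x1 * x2 * y1 * y2))
    (hx4 : x4 = (x1 * y2 - y1 * x2) / (1 - d * x1 * x2 * y1 * y2))
    (hy4 : y4 = (y1 * y2 + a * x1 * x2) / (1 + d * x1 * x2 * y1 * y2))
    (rP rQ L M : K)
    (hrP : rP = y1 ^ 2) (hrQ : rQ = y2 ^ 2)
    (hL : L = (d ^ 2 * rP ^ 2 - 2 * a * d * rP + a ^ 2) * rQ ^ 2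
        + (-(2 * a * d) * rP ^ 2 + (2 * a * d + 2 * a ^ 2) * rP - 2 * a ^ 2) * rQ
        + a ^ 2 * rP ^ 2 - 2 * a ^ 2 * rP + a ^ 2)
    (hM : M = (d ^ 2 * rP ^ 2 - 2 * d ^ 2 * rP + d ^ 2) * rQ ^ 2
        + (-(2 * d ^ 2) * rP ^ 2 + (2 * d ^ 2 + 2 * a * d) * rP - 2 * a * d) * rQ
        + d ^ 2 * rP ^ 2 - 2 * a * d * rP + a ^ 2)
    (hM0 : M ≠ 0) :
    y3 ^ 2 * y4 ^ 2 = L / M := by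
  subst hrP hrQ hL hM hx3 hy3 hx4 hy4
  -- curve relations
  have hx1sq : x1 ^ 2 * (a - d * y1 ^ 2) = 1 - y1 ^ 2 := by linear_combination hP
  have hx2sq : x2 ^ 2 * (a - d * y2 ^ 2) = 1 - y2 ^ 2 := by linear_combination hQ
  have hA : a - d * y1 ^ 2 ≠ 0 := by
    intro h
    have h1 : (1 : K) - y1 ^ 2 = 0 := by rw [← hx1sq, h, mul_zero]
    exact had (by linear_combination h - d * h1)
  have hB : a - d * y2 ^ 2 ≠ 0 := by
    intro h
    have h1 : (1 : K) - y2 ^ 2 = 0 := by rw [← hx2sq, h, mul_zero]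
    exact had (by linear_combination h - d * h1)
  have hAB : (a - d * y1 ^ 2) * (a - d * y2 ^ 2) ≠ 0 := mul_ne_zero hA hB
  have hu : x1 ^ 2 * x2 ^ 2 * ((a - d * y1 ^ 2) * (a - d * y2 ^ 2))
      = (1 - y1 ^ 2) * (1 - y2 ^ 2) := by
    linear_combination (x2 ^ 2 * (a - d * y2 ^ 2)) * hx1sq + (1 - y1 ^ 2) * hx2sq
  set S := d * y1 ^ 2 * y2 ^ 2 - a * y1 ^ 2 - a * y2 ^ 2 + a with hS
  set T := d * y1 ^ 2 * y2 ^ 2 - d * y1 ^ 2 - d * y2 ^ 2 + a with hT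
  have eq1 : (y1 ^ 2 * y2 ^ 2 - a ^ 2 * (x1 ^ 2 * x2 ^ 2))
      * ((a - d * y1 ^ 2) * (a - d * y2 ^ 2))
      = (d * y1 ^ 2 * y2 ^ 2 - a) * S := by
    rw [hS]; linear_combination (-a ^ 2) * hu
  have eq2 : (1 - d ^ 2 * (x1 ^ 2 * x2 ^ 2) * (y1 ^ 2 * y2 ^ 2))
      * ((a - d * y1 ^ 2) * (a - d * y2 ^ 2))
      = -((d * y1 ^ 2 * y2 ^ 2 - a) * T) := by
    rw [hT]; linear_combination (-(d ^ 2 * (y1 ^ 2 * y2 ^ 2))) * hu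
  have hDD : (1 - d ^ 2 * (x1 ^ 2 * x2 ^ 2) * (y1 ^ 2 * y2 ^ 2)) ≠ 0 := by
    have h12 : (1 - d * x1 * x2 * y1 * y2) * (1 + d * x1 * x2 * y1 * y2)
        = 1 - d ^ 2 * (x1 ^ 2 * x2 ^ 2) * (y1 ^ 2 * y2 ^ 2) := by ring
    rw [← h12]; exact mul_ne_zero hden2 hden1
  have hLS : (d ^ 2 * (y1 ^ 2) ^ 2 - 2 * a * d * y1 ^ 2 + a ^ 2) * (y2 ^ 2) ^ 2
        + (-(2 * a * d) * (y1 ^ 2) ^ 2 + (2 * a * d + 2 * a ^ 2) * y1 ^ 2 - 2 * a ^ 2) * y2 ^ 2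
        + a ^ 2 * (y1 ^ 2) ^ 2 - 2 * a ^ 2 * y1 ^ 2 + a ^ 2 = S ^ 2 := by
    rw [hS]; ring
  have hMT : (d ^ 2 * (y1 ^ 2) ^ 2 - 2 * d ^ 2 * y1 ^ 2 + d ^ 2) * (y2 ^ 2) ^ 2
        + (-(2 * d ^ 2) * (y1 ^ 2) ^ 2 + (2 * d ^ 2 + 2 * a * d) * y1 ^ 2 - 2 * a * d) * y2 ^ 2
        + d ^ 2 * (y1 ^ 2) ^ 2 - 2 * a * d * y1 ^ 2 + a ^ 2 = T ^ 2 := by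
    rw [hT]; ring
  rw [hLS, hMT, eq_div_iff (hMT ▸ hM0)]
  -- main polynomial identity
  have key : (y1 ^ 2 * y2 ^ 2 - a ^ 2 * (x1 ^ 2 * x2 ^ 2)) ^ 2 * T ^ 2
      = S ^ 2 * (1 - d ^ 2 * (x1 ^ 2 * x2 ^ 2) * (y1 ^ 2 * y2 ^ 2)) ^ 2 := by
    have h1 := congrArg (· ^ 2) eq1
    have h2 := congrArg (· ^ 2) eq2
    have h3 : ((y1 ^ 2 * y2 ^ 2 - a ^ 2 * (x1 ^ 2 * x2 ^ 2)) ^ 2 * T ^ 2)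
        * ((a - d * y1 ^ 2) * (a - d * y2 ^ 2)) ^ 2
        = (S ^ 2 * (1 - d ^ 2 * (x1 ^ 2 * x2 ^ 2) * (y1 ^ 2 * y2 ^ 2)) ^ 2)
        * ((a - d * y1 ^ 2) * (a - d * y2 ^ 2)) ^ 2 := by
      linear_combination T ^ 2 * h1 - S ^ 2 * h2
    exact mul_right_cancel₀ (pow_ne_zero 2 hAB) h3
  have hy34 : ((y1 * y2 - a * x1 * x2) / (1 - d * x1 * x2 * y1 * y2)) ^ 2 *
      ((y1 * y2 + a * x1 * x2) / (1 + d * x1 * x2 * y1 * y2)) ^ 2 *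
      (1 - d ^ 2 * (x1 ^ 2 * x2 ^ 2) * (y1 ^ 2 * y2 ^ 2)) ^ 2
      = (y1 ^ 2 * y2 ^ 2 - a ^ 2 * (x1 ^ 2 * x2 ^ 2)) ^ 2 := by
    have h12 : (1 - d ^ 2 * (x1 ^ 2 * x2 ^ 2) * (y1 ^ 2 * y2 ^ 2))
        = (1 - d * x1 * x2 * y1 * y2) * (1 + d * x1 * x2 * y1 * y2) := by ring
    rw [h12, div_pow, div_pow, div_mul_div_comm, div_mul_eq_mul_div,
      div_eq_iff (mul_ne_zero (pow_ne_zero 2 hden2) (pow_ne_zero 2 hden1))]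
    ring
  have hfin : ((y1 * y2 - a * x1 * x2) / (1 - d * x1 * x2 * y1 * y2)) ^ 2 *
      ((y1 * y2 + a * x1 * x2) / (1 + d * x1 * x2 * y1 * y2)) ^ 2 * T ^ 2 *
      (1 - d ^ 2 * (x1 ^ 2 * x2 ^ 2) * (y1 ^ 2 * y2 ^ 2)) ^ 2
      = S ^ 2 * (1 - d ^ 2 * (x1 ^ 2 * x2 ^ 2) * (y1 ^ 2 * y2 ^ 2)) ^ 2 := by
    linear_combination T ^ 2 * hy34 + key
  exact mul_right_cancel₀ (pow_ne_zero 2 hDD) hfin
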